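/- For natural numbers n ≥ k ≥ 1, one has n · c_n² · c_{k-1}² ≤ k · c_k² · c_{n-1}², with equality if and only if n = k. -/

import Mathlib

set_option linter.unusedTactic false
set_option linter.unnecessarySeqFocus false

open Real MeasureTheory intervalIntegral

/-- `∫ x in 0..π, sin x ^ n`. -/
noncomputable def sinInt (n : ℕ) : ℝ := ∫ x in (0:ℝ)..Real.pi, Real.sin x ^ n

lemma sinInt_pos (n : ℕ) : 0 < sinInt n := integral_sin_pow_pos n

lemma sinInt_zero : sinInt 0 = Real.pi := by simp [sinInt]

lemma sinInt_one : sinInt 1 = 2 := by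
  norm_num [sinInt, integral_sin]

lemma sinInt_rec (n : ℕ) : sinInt (n + 2) = ((n:ℝ) + 1) / ((n:ℝ) + 2) * sinInt n := by
  have h := integral_sin_pow (a := 0) (b := Real.pi) n
  simpa [sinInt] using h

lemma sinInt_mul (n : ℕ) : ((n:ℝ) + 1) * (sinInt n * sinInt (n + 1)) = 2 * Real.pi := by
  induction n with
  | zero => norm_num [sinInt_zero, sinInt_one]; ring
  | succ m ih =>
    have h2 : ((m:ℝ) + 2) ≠ 0 := by positivity
    rw [show m + 1 + 1 = m + 2 from rfl, sinInt_rec m]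
    push_cast
    field_simp
    linear_combination ((m:ℝ)+2) * ih

lemma sinInt_sq_lt (n : ℕ) : sinInt (n + 1) ^ 2 < sinInt n * sinInt (n + 2) := by
  have hint : ∀ m : ℕ, IntervalIntegrable (fun y : ℝ => Real.sin y ^ m) volume 0 Real.pi :=
    fun m => ((Real.continuous_sin.pow m)).intervalIntegrable 0 Real.pi
  have key : ∀ x : ℝ,
      (∫ y in (0:ℝ)..Real.pi, Real.sin x ^ n * Real.sin y ^ n * (Real.sin x - Real.sin y) ^ 2)
        = Real.sin x ^ (n+2) * sinInt n - 2 * Real.sin x ^ (n+1) * sinInt (n+1)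
            + Real.sin x ^ n * sinInt (n+2) := by
    intro x
    have hfun : (fun y : ℝ => Real.sin x ^ n * Real.sin y ^ n * (Real.sin x - Real.sin y) ^ 2)
        = fun y : ℝ => (Real.sin x ^ (n+2) * Real.sin y ^ n
            - (2 * Real.sin x ^ (n+1)) * Real.sin y ^ (n+1))
            + Real.sin x ^ n * Real.sin y ^ (n+2) := by
      funext y; ring
    rw [hfun, intervalIntegral.integral_add (((hint n).const_mul _).sub ((hint (n+1)).const_mul _))
        ((hint (n+2)).const_mul _),
      intervalIntegral.integral_sub ((hint n).const_mul _) ((hint (n+1)).const_mul _),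
      intervalIntegral.integral_const_mul, intervalIntegral.integral_const_mul,
      intervalIntegral.integral_const_mul]
    rfl
  set A := sinInt n
  set B := sinInt (n+1)
  set C := sinInt (n+2)
  have g_nonneg : ∀ x ∈ Set.Ioc (0:ℝ) Real.pi,
      0 ≤ Real.sin x ^ (n+2) * A - 2 * Real.sin x ^ (n+1) * B + Real.sin x ^ n * C := by
    intro x hx
    rw [← key x]
    apply intervalIntegral.integral_nonneg Real.pi_pos.le
    intro y hy
    have hsx : 0 ≤ Real.sin x := Real.sin_nonneg_of_nonneg_of_le_pi hx.1.le hx.2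
    have hsy : 0 ≤ Real.sin y := Real.sin_nonneg_of_nonneg_of_le_pi hy.1 hy.2
    exact mul_nonneg (mul_nonneg (pow_nonneg hsx _) (pow_nonneg hsy _)) (sq_nonneg _)
  have mid_pos : 0 < Real.sin (Real.pi/2) ^ (n+2) * A - 2 * Real.sin (Real.pi/2) ^ (n+1) * B
      + Real.sin (Real.pi/2) ^ n * C := by
    rw [← key (Real.pi/2)]
    apply intervalIntegral.integral_pos Real.pi_pos
    · exact Continuous.continuousOn (by continuity)
    · intro y hy
      have hsx : 0 ≤ Real.sin (Real.pi/2) := by rw [Real.sin_pi_div_two]; norm_num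
      have hsy : 0 ≤ Real.sin y := Real.sin_nonneg_of_nonneg_of_le_pi hy.1.le hy.2
      exact mul_nonneg (mul_nonneg (pow_nonneg hsx _) (pow_nonneg hsy _)) (sq_nonneg _)
    · refine ⟨Real.pi/6, ⟨by positivity, by linarith [Real.pi_pos]⟩, ?_⟩
      rw [Real.sin_pi_div_two, Real.sin_pi_div_six]
      norm_num
  have outer_pos : 0 < ∫ x in (0:ℝ)..Real.pi,
      (Real.sin x ^ (n+2) * A - 2 * Real.sin x ^ (n+1) * B + Real.sin x ^ n * C) := by
    apply intervalIntegral.integral_pos Real.pi_pos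
    · exact Continuous.continuousOn (by continuity)
    · exact g_nonneg
    · exact ⟨Real.pi/2, ⟨by positivity, by linarith [Real.pi_pos]⟩, mid_pos⟩
  have expand : (∫ x in (0:ℝ)..Real.pi,
      (Real.sin x ^ (n+2) * A - 2 * Real.sin x ^ (n+1) * B + Real.sin x ^ n * C))
        = 2 * (A * C - B ^ 2) := by
    rw [intervalIntegral.integral_add (((hint (n+2)).mul_const _).sub
        (((hint (n+1)).const_mul _).mul_const _)) ((hint n).mul_const _),
      intervalIntegral.integral_sub ((hint (n+2)).mul_const _)
        (((hint (n+1)).const_mul _).mul_const _),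
      intervalIntegral.integral_mul_const, intervalIntegral.integral_mul_const,
      intervalIntegral.integral_mul_const, intervalIntegral.integral_const_mul]
    have e0 : (∫ x in (0:ℝ)..Real.pi, Real.sin x ^ n) = sinInt n := rfl
    have e1 : (∫ x in (0:ℝ)..Real.pi, Real.sin x ^ (n+1)) = sinInt (n+1) := rfl
    have e2 : (∫ x in (0:ℝ)..Real.pi, Real.sin x ^ (n+2)) = sinInt (n+2) := rfl
    rw [e0, e1, e2]
    ring
  linarith [expand ▸ outer_pos]

/-- `sphereVolume j` is the volume `c_j` of the unit sphere `S^j ⊆ ℝ^{j+1}`,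
given explicitly by `c_j = 2 π^{(j+1)/2} / Γ((j+1)/2)`. -/
noncomputable def sphereVolume (j : ℕ) : ℝ :=
  2 * Real.pi ^ (((j : ℝ) + 1) / 2) / Real.Gamma (((j : ℝ) + 1) / 2)

lemma gamma_bridge (m : ℕ) :
    Real.Gamma (((m:ℝ) + 2) / 2) * sinInt m = Real.sqrt Real.pi * Real.Gamma (((m:ℝ) + 1) / 2) := by
  induction m with
  | zero =>
    simp only [Nat.cast_zero, zero_add]
    norm_num [Real.Gamma_one, sinInt_zero, Real.Gamma_one_half_eq]
    exact (Real.mul_self_sqrt Real.pi_pos.le).symm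
  | succ m ih =>
    have h1 : ((m:ℝ) + 1) / 2 ≠ 0 := by positivity
    have hIm := (sinInt_pos m).ne'
    have h3 := sinInt_mul m
    have hππ : Real.sqrt Real.pi * Real.sqrt Real.pi = Real.pi :=
      Real.mul_self_sqrt Real.pi_pos.le
    push_cast
    rw [show ((m:ℝ) + 1 + 2) / 2 = ((m:ℝ) + 1) / 2 + 1 by ring, Real.Gamma_add_one h1,
      show ((m:ℝ) + 1 + 1) / 2 = ((m:ℝ) + 2) / 2 by ring]
    apply mul_right_cancel₀ hIm
    linear_combination (Real.Gamma (((m:ℝ) + 1) / 2) / 2) * h3 - Real.sqrt Real.pi * ih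
      - Real.Gamma (((m:ℝ) + 1) / 2) * hππ

lemma sphereVolume_pos (j : ℕ) : 0 < sphereVolume j := by
  have h : 0 < Real.Gamma (((j:ℝ) + 1) / 2) := Real.Gamma_pos_of_pos (by positivity)
  have h2 : 0 < Real.pi ^ (((j:ℝ) + 1) / 2) := Real.rpow_pos_of_pos Real.pi_pos _
  unfold sphereVolume
  positivity

lemma sphereVolume_succ (m : ℕ) : sphereVolume (m + 1) = sinInt m * sphereVolume m := by
  have hG1 : 0 < Real.Gamma (((m:ℝ) + 1) / 2) := Real.Gamma_pos_of_pos (by positivity)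
  have hG2 : 0 < Real.Gamma (((m:ℝ) + 2) / 2) := Real.Gamma_pos_of_pos (by positivity)
  have hb := gamma_bridge m
  have hr : Real.pi ^ (((m:ℝ) + 2) / 2)
      = Real.pi ^ (((m:ℝ) + 1) / 2) * Real.sqrt Real.pi := by
    rw [Real.sqrt_eq_rpow, ← Real.rpow_add Real.pi_pos]
    norm_num
    ring_nf
  unfold sphereVolume
  push_cast
  rw [show ((m:ℝ) + 1 + 1) / 2 = ((m:ℝ) + 2) / 2 by ring]
  rw [hr, div_eq_iff hG2.ne']
  field_simp
  linear_combination (-1:ℝ) * hb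

lemma key_step (n : ℕ) : ((n:ℝ) + 2) * sinInt (n + 1) ^ 2 < ((n:ℝ) + 1) * sinInt n ^ 2 := by
  have h := sinInt_sq_lt n
  have hrec := sinInt_rec n
  have h2 : (0:ℝ) < (n:ℝ) + 2 := by positivity
  have heq : ((n:ℝ) + 2) * (sinInt n * sinInt (n + 2)) = ((n:ℝ) + 1) * sinInt n ^ 2 := by
    rw [hrec]; field_simp
  nlinarith

lemma sinInt_dec : ∀ a b : ℕ, a < b →
    ((b:ℝ) + 1) * sinInt b ^ 2 < ((a:ℝ) + 1) * sinInt a ^ 2 := by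
  intro a b hab
  induction b, hab using Nat.le_induction with
  | base =>
    have := key_step a
    push_cast
    convert this using 2 <;> push_cast <;> ring
  | succ b hb ih =>
    have h := key_step b
    push_cast at ih ⊢
    calc ((b:ℝ) + 1 + 1) * sinInt (b + 1) ^ 2 = ((b:ℝ) + 2) * sinInt (b + 1) ^ 2 := by ring
    _ < ((b:ℝ) + 1) * sinInt b ^ 2 := h
    _ < ((a:ℝ) + 1) * sinInt a ^ 2 := ih

/-- **Volumes of spheres inequality.** For natural numbers `n ≥ k ≥ 1`,
`n · c_n² · c_{k-1}² ≤ k · c_k² · c_{n-1}²`, with equality if and only if `n = k`. -/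
theorem sphereVolume_inequality (n k : ℕ) (hk : 1 ≤ k) (hkn : k ≤ n) :
    (n : ℝ) * sphereVolume n ^ 2 * sphereVolume (k - 1) ^ 2
      ≤ (k : ℝ) * sphereVolume k ^ 2 * sphereVolume (n - 1) ^ 2
    ∧ ((n : ℝ) * sphereVolume n ^ 2 * sphereVolume (k - 1) ^ 2
        = (k : ℝ) * sphereVolume k ^ 2 * sphereVolume (n - 1) ^ 2 ↔ n = k) := by
  obtain ⟨a, rfl⟩ : ∃ a, k = a + 1 := ⟨k - 1, (Nat.succ_pred_eq_of_pos hk).symm⟩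
  obtain ⟨b, rfl⟩ : ∃ b, n = b + 1 := ⟨n - 1, (Nat.succ_pred_eq_of_pos (le_trans hk hkn)).symm⟩
  simp only [Nat.add_sub_cancel]
  rw [sphereVolume_succ a, sphereVolume_succ b]
  have hca := sphereVolume_pos a
  have hcb := sphereVolume_pos b
  have hab : a ≤ b := by omega
  push_cast
  rcases eq_or_lt_of_le hab with rfl | hlt
  · exact ⟨le_rfl, by simp⟩
  · have hd := sinInt_dec a b hlt
    have hmain : ((b:ℝ) + 1) * (sinInt b * sphereVolume b) ^ 2 * sphereVolume a ^ 2
        < ((a:ℝ) + 1) * (sinInt a * sphereVolume a) ^ 2 * sphereVolume b ^ 2 := by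
      have hP : (0:ℝ) < sphereVolume b ^ 2 * sphereVolume a ^ 2 := by positivity
      nlinarith [mul_lt_mul_of_pos_right hd hP]
    refine ⟨hmain.le, ?_, fun heq => by omega⟩
    intro heq
    exact absurd heq hmain.ne
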